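/- Let A be a unital complex C*-algebra and let p, q ∈ A be projections (p* = p = p², q* = q = q²). Then 1 − q·p·q and 1 − p·q·p are positive elements of A, and the 2×2 matrix over A given by U := [[(1 − q·p·q)^{1/2} , q·p],[p·q , −(1 − p·q·p)^{1/2}]] is a selfadjoint unitary: U* = U and U² = 1. -/

import Mathlib

open Polynomial in
private lemma aeval_semiconj {A : Type*} [Ring A] [Algebra ℝ A] {a b x : A}
    (h : a * x = x * b) (P : ℝ[X]) : aeval a P * x = x * aeval b P := by
  have hpow : ∀ m : ℕ, a ^ m * x = x * b ^ m := by
    intro m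
    induction m with
    | zero => simp
    | succ k ih => rw [pow_succ', mul_assoc, ih, ← mul_assoc, h, mul_assoc, ← pow_succ']
  induction P using Polynomial.induction_on with
  | C r => simpa using Algebra.commutes r x
  | add P Q hP hQ => simp only [map_add, add_mul, mul_add, hP, hQ]
  | monomial n r _ =>
    simp only [map_mul, aeval_C, map_pow, aeval_X]
    rw [mul_assoc, hpow (n + 1), ← mul_assoc, Algebra.commutes r x, mul_assoc]

set_option maxHeartbeats 1000000 in
private lemma sqrt_semiconj {A : Type*} [CStarAlgebra A] [PartialOrder A] [StarOrderedRing A]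
    {a b x : A} (ha : 0 ≤ a) (hb : 0 ≤ b) (h : a * x = x * b) :
    CFC.sqrt a * x = x * CFC.sqrt b := by
  nontriviality A
  -- `sqrt` agrees with the real continuous functional calculus of `Real.sqrt`
  have hsqrt : ∀ c : A, 0 ≤ c → CFC.sqrt c = cfc Real.sqrt c := by
    intro c hc
    have hpos : 0 ≤ cfc Real.sqrt c := cfc_nonneg fun t _ => Real.sqrt_nonneg t
    have hmul : cfc Real.sqrt c * cfc Real.sqrt c = c := by
      rw [← cfc_mul Real.sqrt Real.sqrt c]
      calc cfc (fun t => Real.sqrt t * Real.sqrt t) c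
          = cfc (fun t : ℝ => t) c :=
            cfc_congr fun t ht => Real.mul_self_sqrt (spectrum_nonneg_of_nonneg hc ht)
        _ = c := cfc_id ℝ c
    exact CFC.sqrt_unique hmul hpos
  set M : ℝ := max ‖a‖ ‖b‖ with hMdef
  have hM : (0 : ℝ) ≤ M := le_trans (norm_nonneg a) (le_max_left _ _)
  have hspec : ∀ c : A, 0 ≤ c → ‖c‖ ≤ M → spectrum ℝ c ⊆ Set.Icc 0 M := by
    intro c hc hcM t ht
    exact ⟨spectrum_nonneg_of_nonneg hc ht,
      le_trans (le_trans (le_abs_self t) (spectrum.norm_le_norm_of_mem ht)) hcM⟩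
  have hsa : spectrum ℝ a ⊆ Set.Icc 0 M := hspec a ha (le_max_left _ _)
  have hsb : spectrum ℝ b ⊆ Set.Icc 0 M := hspec b hb (le_max_right _ _)
  -- main ε-estimate via Weierstrass approximation
  have hx0 : ∀ ε : ℝ, 0 < ε → ‖CFC.sqrt a * x - x * CFC.sqrt b‖ ≤ ε * (2 * ‖x‖ + 1) := by
    intro ε hε
    -- the square root function as a continuous map on `[0, M]`
    let f : C(Set.Icc (0:ℝ) M, ℝ) := ⟨fun t => Real.sqrt t, by fun_prop⟩
    have hf : f ∈ closure (polynomialFunctions (Set.Icc (0:ℝ) M) : Set C(Set.Icc (0:ℝ) M, ℝ)) := by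
      have h1 := polynomialFunctions_closure_eq_top (0:ℝ) M
      have h2 : f ∈ (polynomialFunctions (Set.Icc (0:ℝ) M)).topologicalClosure := by
        rw [h1]; trivial
      rwa [← Subalgebra.topologicalClosure_coe]
    obtain ⟨g, hg_mem, hdist⟩ := Metric.mem_closure_iff.mp hf ε hε
    rw [show (polynomialFunctions (Set.Icc (0:ℝ) M) : Set C(Set.Icc (0:ℝ) M, ℝ))
        = Set.range (Polynomial.toContinuousMapOnAlgHom (Set.Icc (0:ℝ) M)) from
      polynomialFunctions_coe _] at hg_mem
    obtain ⟨P, rfl⟩ := hg_mem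
    have hpt : ∀ t ∈ Set.Icc (0:ℝ) M, |Real.sqrt t - P.eval t| ≤ ε := by
      intro t ht
      have h3 := (ContinuousMap.dist_le hε.le).mp hdist.le ⟨t, ht⟩
      simpa [f, Real.dist_eq, Polynomial.toContinuousMapOn,
        Polynomial.toContinuousMap] using h3
    have hbound : ∀ c : A, 0 ≤ c → spectrum ℝ c ⊆ Set.Icc 0 M →
        ‖cfc Real.sqrt c - Polynomial.aeval c P‖ ≤ ε := by
      intro c hc hcs
      rw [← cfc_polynomial P c, ← cfc_sub Real.sqrt P.eval c]
      exact norm_cfc_le hε.le fun t ht => by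
        simpa [Real.norm_eq_abs] using hpt t (hcs ht)
    have key : CFC.sqrt a * x - x * CFC.sqrt b
        = (cfc Real.sqrt a - Polynomial.aeval a P) * x
          + x * (Polynomial.aeval b P - cfc Real.sqrt b) := by
      rw [hsqrt a ha, hsqrt b hb, sub_mul, mul_sub, aeval_semiconj h P]
      abel
    rw [key]
    calc ‖(cfc Real.sqrt a - Polynomial.aeval a P) * x
          + x * (Polynomial.aeval b P - cfc Real.sqrt b)‖
        ≤ ‖(cfc Real.sqrt a - Polynomial.aeval a P) * x‖
          + ‖x * (Polynomial.aeval b P - cfc Real.sqrt b)‖ := norm_add_le _ _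
      _ ≤ ‖cfc Real.sqrt a - Polynomial.aeval a P‖ * ‖x‖
          + ‖x‖ * ‖Polynomial.aeval b P - cfc Real.sqrt b‖ :=
          add_le_add (norm_mul_le _ _) (norm_mul_le _ _)
      _ ≤ ε * ‖x‖ + ‖x‖ * ε := by
          have h1 := hbound a ha hsa
          have h2 : ‖Polynomial.aeval b P - cfc Real.sqrt b‖ ≤ ε :=
            norm_sub_rev (cfc Real.sqrt b) (Polynomial.aeval b P) ▸ hbound b hb hsb
          exact add_le_add (mul_le_mul_of_nonneg_right h1 (norm_nonneg x))
            (mul_le_mul_of_nonneg_left h2 (norm_nonneg x))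
      _ ≤ ε * (2 * ‖x‖ + 1) := by nlinarith [norm_nonneg x]
  have h0 : ‖CFC.sqrt a * x - x * CFC.sqrt b‖ ≤ 0 := by
    refine le_of_forall_pos_le_add fun ε hε => ?_
    have hd : (0:ℝ) < 2 * ‖x‖ + 1 := by nlinarith [norm_nonneg x]
    calc ‖CFC.sqrt a * x - x * CFC.sqrt b‖
        ≤ (ε / (2 * ‖x‖ + 1)) * (2 * ‖x‖ + 1) := hx0 _ (by positivity)
      _ = ε := div_mul_cancel₀ _ (ne_of_gt hd)
      _ ≤ 0 + ε := by linarith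
  exact sub_eq_zero.mp (norm_le_zero_iff.mp h0)

/-- **the selfadjoint unitary `U_p` built from two projections.** For projections
`p`, `q` in a unital complex C*-algebra `A`, the elements `1 − qpq` and `1 − pqp` are positive,
and the 2×2 matrix `U = [[(1 − qpq)^{1/2}, qp], [pq, −(1 − pqp)^{1/2}]]` over `A` is a
selfadjoint unitary: `U* = U` and `U² = 1`. -/
theorem selfadjoint_unitary_of_two_projections
    {A : Type*} [CStarAlgebra A] [PartialOrder A] [StarOrderedRing A]
    (p q : A) (hp : IsIdempotentElem p) (hpsa : IsSelfAdjoint p)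
    (hq : IsIdempotentElem q) (hqsa : IsSelfAdjoint q)
    (U : Matrix (Fin 2) (Fin 2) A)
    (hU : U = !![CFC.sqrt (1 - q * p * q), q * p;
                 p * q, -CFC.sqrt (1 - p * q * p)]) :
    0 ≤ 1 - q * p * q ∧ 0 ≤ 1 - p * q * p ∧
    star U = U ∧ U * U = 1 := by
  have hp' : ∀ t : A, p * (p * t) = p * t := fun t => by rw [← mul_assoc, hp.eq]
  have hq' : ∀ t : A, q * (q * t) = q * t := fun t => by rw [← mul_assoc, hq.eq]
  have h1p : 0 ≤ 1 - p := by
    have h := star_mul_self_nonneg (1 - p)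
    rwa [star_sub, star_one, hpsa.star_eq, hp.one_sub.eq] at h
  have h1q : 0 ≤ 1 - q := by
    have h := star_mul_self_nonneg (1 - q)
    rwa [star_sub, star_one, hqsa.star_eq, hq.one_sub.eq] at h
  have ha0 : 0 ≤ 1 - q * p * q := by
    have e1 : 1 - q * p * q = (1 - q) + star q * (1 - p) * q := by
      rw [hqsa.star_eq]
      have : q * (1 - p) * q = q - q * p * q := by
        rw [mul_sub, mul_one, sub_mul, hq.eq]
      rw [this]; abel
    rw [e1]
    exact add_nonneg h1q (star_left_conjugate_nonneg h1p q)
  have hb0 : 0 ≤ 1 - p * q * p := by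
    have e1 : 1 - p * q * p = (1 - p) + star p * (1 - q) * p := by
      rw [hpsa.star_eq]
      have : p * (1 - q) * p = p - p * q * p := by
        rw [mul_sub, mul_one, sub_mul, hp.eq]
      rw [this]; abel
    rw [e1]
    exact add_nonneg h1p (star_left_conjugate_nonneg h1q p)
  have s1 : IsSelfAdjoint (CFC.sqrt (1 - q * p * q)) := .of_nonneg (CFC.sqrt_nonneg _)
  have s2 : IsSelfAdjoint (CFC.sqrt (1 - p * q * p)) := .of_nonneg (CFC.sqrt_nonneg _)
  refine ⟨ha0, hb0, ?_, ?_⟩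
  · subst hU
    ext i j
    fin_cases i <;> fin_cases j <;>
      simp [Matrix.star_apply, s1.star_eq, s2.star_eq, star_mul, hpsa.star_eq, hqsa.star_eq]
  · have hcomm1 : (1 - q * p * q) * (q * p) = (q * p) * (1 - p * q * p) := by
      simp only [sub_mul, mul_sub, one_mul, mul_one, mul_assoc, hp', hq']
    have hcomm2 : (1 - p * q * p) * (p * q) = (p * q) * (1 - q * p * q) := by
      simp only [sub_mul, mul_sub, one_mul, mul_one, mul_assoc, hp', hq']
    have hsc1 := sqrt_semiconj ha0 hb0 hcomm1
    have hsc2 := sqrt_semiconj hb0 ha0 hcomm2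
    have k00 : CFC.sqrt (1 - q * p * q) * CFC.sqrt (1 - q * p * q) + q * p * (p * q) = 1 := by
      rw [CFC.sqrt_mul_sqrt_self _ ha0]
      have : q * p * (p * q) = q * p * q := by
        rw [mul_assoc, hp', ← mul_assoc]
      rw [this]; abel
    have k01 : CFC.sqrt (1 - q * p * q) * (q * p) + q * p * -CFC.sqrt (1 - p * q * p) = 0 := by
      rw [mul_neg, hsc1, add_neg_cancel]
    have k10 : p * q * CFC.sqrt (1 - q * p * q) + -CFC.sqrt (1 - p * q * p) * (p * q) = 0 := by
      rw [neg_mul, hsc2, add_neg_cancel]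
    have k11 : p * q * (q * p) + -CFC.sqrt (1 - p * q * p) * -CFC.sqrt (1 - p * q * p) = 1 := by
      rw [neg_mul_neg, CFC.sqrt_mul_sqrt_self _ hb0]
      have : p * q * (q * p) = p * q * p := by
        rw [mul_assoc, hq', ← mul_assoc]
      rw [this]; abel
    subst hU
    rw [Matrix.mul_fin_two, k00, k01, k10, k11, Matrix.one_fin_two]
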